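/- Let k be a field of characteristic ≠ 2 and let h(x) = x^4 + bx^2 + d be a polynomial over k with distinct roots. Then h is irreducible over k if and only if none of the following are squares in k (the latter two interpreted in k(√d)): (i) b^2 - 4d in k, (ii) -b + 2√d, (iii) -b - 2√d. -/

import Mathlib

open Polynomial

section Helpers

variable {k : Type*} [Field k]

private theorem kw_deg_pos_of_nonunit {a : k[X]} (ha : a ≠ 0) (hau : ¬ IsUnit a) :
    1 ≤ a.natDegree := by
  by_contra hlt
  push_neg at hlt
  have h0 : a.natDegree = 0 := by omega
  have : a = C (a.coeff 0) := eq_C_of_natDegree_eq_zero h0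
  have hc : a.coeff 0 ≠ 0 := fun h => ha (by rw [this, h, map_zero])
  exact hau (this ▸ isUnit_C.mpr (isUnit_iff_ne_zero.mpr hc))

private theorem kw_monic2 {g : k[X]} (hm : g.Monic) (hd : g.natDegree = 2) :
    g = X ^ 2 + C (g.coeff 1) * X + C (g.coeff 0) := by
  ext n
  match n with
  | 0 => simp
  | 1 => simp
  | 2 => simpa [coeff_X_pow] using (hd ▸ hm.coeff_natDegree : g.coeff 2 = 1)
  | (n+3) =>
    rw [coeff_eq_zero_of_natDegree_lt (by omega)]
    simp [coeff_X_pow, coeff_C]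

private theorem kw_expand2 (p q r s : k) :
    (X ^ 2 + C p * X + C q) * (X ^ 2 + C r * X + C s) =
      X ^ 4 + C (p + r) * X ^ 3 + C (q + s + p * r) * X ^ 2 + C (p * s + q * r) * X
        + C (q * s) := by
  simp only [map_add, map_mul]; ring

private theorem kw_coeffs4 {b d a3 a2 a1 a0 : k}
    (h : (X ^ 4 + C b * X ^ 2 + C d : k[X]) =
      X ^ 4 + C a3 * X ^ 3 + C a2 * X ^ 2 + C a1 * X + C a0) :
    a3 = 0 ∧ a2 = b ∧ a1 = 0 ∧ a0 = d := by
  have h3 := congrArg (fun f => Polynomial.coeff f 3) h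
  have h2 := congrArg (fun f => Polynomial.coeff f 2) h
  have h1 := congrArg (fun f => Polynomial.coeff f 1) h
  have h0 := congrArg (fun f => Polynomial.coeff f 0) h
  simp [coeff_X_pow, coeff_C] at h3 h2 h1 h0
  exact ⟨h3.symm, h2.symm, h1.symm, h0.symm⟩

private theorem kw_root_of_deg1_dvd {a f : k[X]} (ha : a.natDegree = 1) (hdvd : a ∣ f) :
    ∃ x : k, f.eval x = 0 := by
  obtain ⟨g, rfl⟩ := hdvd
  have hne : a ≠ 0 := fun h => by simp [h] at ha
  have h1 : a.coeff 1 ≠ 0 := by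
    have := Polynomial.leadingCoeff_ne_zero.mpr hne
    rwa [leadingCoeff, ha] at this
  refine ⟨-(a.coeff 0) / a.coeff 1, ?_⟩
  have := Polynomial.eq_X_add_C_of_degree_le_one (p := a)
    (by rw [degree_eq_natDegree hne, ha]; norm_num)
  rw [eval_mul, this]
  simp [h1]
  left; field_simp; ring

private theorem kw_quartic_factor {f : k[X]} (hm : f.Monic) (hd : f.natDegree = 4)
    (hni : ¬ Irreducible f) :
    (∃ x : k, f.eval x = 0) ∨
      ∃ p q r s : k, f = (X ^ 2 + C p * X + C q) * (X ^ 2 + C r * X + C s) := by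
  have hf0 : f ≠ 0 := hm.ne_zero
  have hnu : ¬ IsUnit f := by
    intro hu; have := natDegree_eq_zero_of_isUnit hu; omega
  rw [irreducible_iff] at hni
  push_neg at hni
  obtain ⟨a, g, hfe, hau, hgu⟩ := hni hnu
  have ha0 : a ≠ 0 := fun h => hf0 (by simpa [h] using hfe)
  have hg0 : g ≠ 0 := fun h => hf0 (by simpa [h] using hfe)
  have hsum : a.natDegree + g.natDegree = 4 := by
    rw [← natDegree_mul ha0 hg0, ← hfe, hd]
  have ha1 := kw_deg_pos_of_nonunit ha0 hau
  have hg1 := kw_deg_pos_of_nonunit hg0 hgu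
  rcases eq_or_ne a.natDegree 1 with h1 | h1
  · exact Or.inl (kw_root_of_deg1_dvd h1 ⟨g, hfe⟩)
  rcases eq_or_ne g.natDegree 1 with h1' | h1'
  · exact Or.inl (kw_root_of_deg1_dvd h1' ⟨a, by rw [hfe]; ring⟩)
  have ha2 : a.natDegree = 2 := by omega
  have hg2 : g.natDegree = 2 := by omega
  set c := a.leadingCoeff with hc
  have hc0 : c ≠ 0 := leadingCoeff_ne_zero.mpr ha0
  have hlc : a.leadingCoeff * g.leadingCoeff = 1 := by
    have := hm
    rw [Monic, hfe, leadingCoeff_mul] at this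
    exact this
  set a' := C c⁻¹ * a with ha'
  set g' := C c * g with hg'
  have ha'm : a'.Monic := by
    rw [Monic, ha', leadingCoeff_mul, leadingCoeff_C]
    field_simp
    exact hc.symm
  have hg'm : g'.Monic := by
    rw [Monic, hg', leadingCoeff_mul, leadingCoeff_C]
    have : g.leadingCoeff = c⁻¹ := by
      field_simp
      linear_combination hlc
    rw [this]; field_simp
  have ha'd : a'.natDegree = 2 := by
    rw [ha', natDegree_C_mul (inv_ne_zero hc0), ha2]
  have hg'd : g'.natDegree = 2 := by
    rw [hg', natDegree_C_mul hc0, hg2]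
  have hfe' : f = a' * g' := by
    rw [ha', hg', hfe]
    have : (C c⁻¹ * a) * (C c * g) = (C c⁻¹ * C c) * (a * g) := by ring
    rw [this, ← map_mul, inv_mul_cancel₀ hc0, map_one, one_mul]
  exact Or.inr ⟨a'.coeff 1, a'.coeff 0, g'.coeff 1, g'.coeff 0,
    by conv_lhs => rw [hfe', kw_monic2 ha'm ha'd, kw_monic2 hg'm hg'd]⟩

private theorem kw_not_isUnit_quad (p q : k) : ¬ IsUnit (X ^ 2 + C p * X + C q : k[X]) := by
  intro hu
  have h0 := natDegree_eq_zero_of_isUnit hu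
  have h2 : (X ^ 2 + C p * X + C q : k[X]).natDegree = 2 := by compute_degree!
  omega

private theorem kw_quartic_not_irr {b d : k} (p q r s : k) (h3 : p + r = 0)
    (hb : q + s + p * r = b) (h1 : p * s + q * r = 0) (h0 : q * s = d) :
    ¬ Irreducible (X ^ 4 + C b * X ^ 2 + C d : k[X]) := by
  intro hirr
  have heq : (X ^ 4 + C b * X ^ 2 + C d : k[X]) =
      (X ^ 2 + C p * X + C q) * (X ^ 2 + C r * X + C s) := by
    rw [kw_expand2, h3, hb, h1, h0]
    simp
  rcases hirr.isUnit_or_isUnit heq with hu | hu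
  · exact kw_not_isUnit_quad _ _ hu
  · exact kw_not_isUnit_quad _ _ hu

private theorem kw_no_root {b d : k} (hirr : Irreducible (X ^ 4 + C b * X ^ 2 + C d : k[X]))
    (x : k) (hx : x ^ 4 + b * x ^ 2 + d = 0) : False := by
  have hx' : (X ^ 4 + C b * X ^ 2 + C d : k[X]).eval x = 0 := by simp [hx]
  obtain ⟨g, hg⟩ := dvd_iff_isRoot.mpr hx'
  have hm : (X ^ 4 + C b * X ^ 2 + C d : k[X]).Monic := by monicity!
  have hd4 : (X ^ 4 + C b * X ^ 2 + C d : k[X]).natDegree = 4 := by compute_degree!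
  rcases hirr.isUnit_or_isUnit hg with hu | hu
  · have := natDegree_eq_zero_of_isUnit hu
    rw [natDegree_X_sub_C] at this
    omega
  · have hg0 : g ≠ 0 := fun h => hm.ne_zero (by simpa [h] using hg)
    have h0 := natDegree_eq_zero_of_isUnit hu
    have hsum : (X - C x).natDegree + g.natDegree = 4 := by
      rw [← natDegree_mul (X_sub_C_ne_zero x) hg0, ← hg, hd4]
    rw [natDegree_X_sub_C] at hsum
    omega

variable {K : Type*} [Field K] [Algebra k K]

private theorem kw_mem_adjoin_sqrt {d : k} {δ : K} (hδ : δ ^ 2 = algebraMap k K d)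
    {y : K} (hy : y ∈ IntermediateField.adjoin k ({δ} : Set K)) :
    ∃ u v : k, y = algebraMap k K u + algebraMap k K v * δ := by
  have hmm : (X ^ 2 - C d : k[X]).Monic := monic_X_pow_sub_C d (by norm_num)
  have hint : IsIntegral k δ := ⟨X ^ 2 - C d, hmm, by simp [hδ]⟩
  have hsa := IntermediateField.adjoin_simple_toSubalgebra_of_isAlgebraic (F := k) hint.isAlgebraic
  have hy' : y ∈ Algebra.adjoin k ({δ} : Set K) := by
    rw [← hsa]; exact hy
  rw [Algebra.adjoin_singleton_eq_range_aeval] at hy'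
  obtain ⟨P, hP⟩ := hy'
  set m : k[X] := X ^ 2 - C d with hm
  have h2m : m.natDegree = 2 := by rw [hm]; compute_degree!
  have hm1 : m ≠ 1 := fun h => by rw [h] at h2m; simp at h2m
  have hnd : (P %ₘ m).natDegree ≤ 1 := by
    have := Polynomial.natDegree_modByMonic_lt P hmm hm1
    omega
  have hform := Polynomial.eq_X_add_C_of_natDegree_le_one hnd
  refine ⟨(P %ₘ m).coeff 0, (P %ₘ m).coeff 1, ?_⟩
  have hsplit := congrArg (aeval δ) (Polynomial.modByMonic_add_div P m)
  have hm0 : aeval δ m = 0 := by simp [hm, hδ]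
  rw [map_add, map_mul, hm0, zero_mul, add_zero] at hsplit
  have hPy : aeval δ P = y := hP
  rw [← hPy, ← hsplit]
  conv_lhs => rw [hform]
  simp only [map_add, map_mul, aeval_X, aeval_C]
  ring

/-- Key lemma for the forward direction: if `−b + 2εδ` is a square in `k(δ)`
(with `ε = ±1`), then the biquadratic is reducible. -/
private theorem kw_aux_sq (h2 : (2 : k) ≠ 0) (b d : k) (δ : K)
    (hδ : δ ^ 2 = algebraMap k K d) (ε : k) (hε : ε * ε = 1) (y : K)
    (hy : y ∈ IntermediateField.adjoin k ({δ} : Set K))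
    (hy2 : y ^ 2 = -(algebraMap k K b) + algebraMap k K ε * (2 * δ)) :
    ¬ Irreducible (X ^ 4 + C b * X ^ 2 + C d : k[X]) := by
  set φ := algebraMap k K with hφ
  have hinj : Function.Injective φ := φ.injective
  obtain ⟨u, v, huv⟩ := kw_mem_adjoin_sqrt hδ hy
  have E2 : φ (u ^ 2 + v ^ 2 * d + b) = φ (2 * ε - 2 * u * v) * δ := by
    rw [huv] at hy2
    simp only [map_add, map_sub, map_mul, map_pow, map_ofNat]
    linear_combination hy2 - (φ v) ^ 2 * hδ
  by_cases hc : 2 * ε - 2 * u * v = 0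
  · -- ε = uv, leading to a root of the quartic in k
    intro hirr
    have hεuv : ε = u * v := by
      have : (2 : k) * (ε - u * v) = 0 := by linear_combination hc
      rcases mul_eq_zero.mp this with h | h
      · exact absurd h h2
      · linear_combination h
    have hz : φ (u ^ 2 + v ^ 2 * d + b) = 0 := by
      rw [E2, hc, map_zero, zero_mul]
    have heq : u ^ 2 + v ^ 2 * d + b = 0 := hinj (by rw [hz, map_zero])
    have huv1 : u * v * (u * v) = 1 := by rw [← hεuv]; exact hε
    exact kw_no_root hirr u (by linear_combination u ^ 2 * heq - d * huv1)
  · -- δ ∈ k, leading to an explicit quadratic factorization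
    set q0 : k := (u ^ 2 + v ^ 2 * d + b) / (2 * ε - 2 * u * v) with hq0def
    have hcK : φ (2 * ε - 2 * u * v) ≠ 0 := fun h => hc (hinj (by rw [h, map_zero]))
    have hδq : δ = φ q0 := by
      rw [hq0def, map_div₀, eq_div_iff hcK, mul_comm, ← E2]
    have hq0sq : q0 ^ 2 = d := by
      apply hinj
      rw [map_pow, ← hδq, hδ]
    have hyp : y = φ (u + v * q0) := by
      rw [huv, hδq, map_add, map_mul]
    set p : k := u + v * q0 with hpdef
    have hp2 : p ^ 2 = -b + ε * (2 * q0) := by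
      apply hinj
      rw [map_pow, ← hyp, hy2]
      simp only [map_add, map_neg, map_mul, map_ofNat]
      rw [hδq]
    exact kw_quartic_not_irr p (ε * q0) (-p) (ε * q0)
      (by ring) (by linear_combination -hp2) (by ring)
      (by linear_combination d * hε + ε * ε * hq0sq)

end Helpers

/-- Kappe–Warren criterion: let `k` be a field of characteristic ≠ 2 and
`h(x) = x⁴ + bx² + d` a squarefree polynomial over `k`.  Fix a square root `δ` of `d`
in an algebraic closure of `k`.  Then `h` is irreducible over `k` if and only if none
of the following is a square: `b² − 4d` in `k`, and `−b + 2δ`, `−b − 2δ` in `k(δ)`. -/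
theorem biquadratic_irreducible_iff_kappe_warren
    {k : Type*} [Field k] (h2 : (2 : k) ≠ 0) (b d : k)
    (hsf : Squarefree (X ^ 4 + C b * X ^ 2 + C d : k[X]))
    (δ : AlgebraicClosure k) (hδ : δ ^ 2 = algebraMap k (AlgebraicClosure k) d) :
    Irreducible (X ^ 4 + C b * X ^ 2 + C d : k[X]) ↔
      (¬ IsSquare (b ^ 2 - 4 * d) ∧
        ¬ (∃ y ∈ IntermediateField.adjoin k ({δ} : Set (AlgebraicClosure k)),
            y ^ 2 = -(algebraMap k (AlgebraicClosure k) b) + 2 * δ) ∧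
        ¬ (∃ y ∈ IntermediateField.adjoin k ({δ} : Set (AlgebraicClosure k)),
            y ^ 2 = -(algebraMap k (AlgebraicClosure k) b) - 2 * δ)) := by
  set φ := algebraMap k (AlgebraicClosure k) with hφ
  have hinj : Function.Injective φ := φ.injective
  have h4 : (4 : k) ≠ 0 := by
    have : (4 : k) = 2 * 2 := by norm_num
    rw [this]; exact mul_ne_zero h2 h2
  constructor
  · intro hirr
    refine ⟨?_, ?_, ?_⟩
    · rintro ⟨e, he⟩
      refine kw_quartic_not_irr (b := b) (d := d) 0 ((b - e) / 2) 0 ((b + e) / 2)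
        (by ring) (by field_simp; ring) (by ring) (by field_simp; linear_combination he) hirr
    · rintro ⟨y, hy, hy2⟩
      refine kw_aux_sq h2 b d δ hδ 1 (by ring) y hy ?_ hirr
      rw [map_one, one_mul]
      exact hy2
    · rintro ⟨y, hy, hy2⟩
      refine kw_aux_sq h2 b d δ hδ (-1) (by ring) y hy ?_ hirr
      rw [map_neg, map_one]
      rw [hy2]; ring
  · rintro ⟨hA, hB, hC⟩
    by_contra hni
    have hm : (X ^ 4 + C b * X ^ 2 + C d : k[X]).Monic := by monicity!
    have hd4 : (X ^ 4 + C b * X ^ 2 + C d : k[X]).natDegree = 4 := by compute_degree!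
    rcases kw_quartic_factor hm hd4 hni with ⟨x, hx⟩ | ⟨p, q, r, s, hfe⟩
    · have hx' : x ^ 4 + b * x ^ 2 + d = 0 := by
        have := hx
        simp at this
        linear_combination this
      exact hA ⟨2 * x ^ 2 + b, by linear_combination (-4) * hx'⟩
    · rw [kw_expand2] at hfe
      obtain ⟨e3, e2, e1, e0⟩ := kw_coeffs4 hfe
      have hr : r = -p := by linear_combination e3
      rw [hr] at e2 e1
      have hps : p * (s - q) = 0 := by linear_combination e1
      rcases mul_eq_zero.mp hps with hp0 | hsq
      · -- p = 0 : b² − 4d is a square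
        rw [hp0] at e2
        exact hA ⟨q - s, by linear_combination (-(b + q + s)) * e2 + 4 * e0⟩
      · -- s = q : −b ± 2δ is a square in k(δ)
        have hs : s = q := by linear_combination hsq
        rw [hs] at e2 e0
        have hp2 : p ^ 2 = -b + 2 * q := by linear_combination -e2
        have hq2 : φ q * φ q = δ ^ 2 := by rw [← map_mul, e0, ← hδ]
        have hcases : (δ - φ q) * (δ + φ q) = 0 := by linear_combination -hq2
        rcases mul_eq_zero.mp hcases with h | h
        · -- δ = φ q
          have hδq : δ = φ q := by linear_combination h
          refine hB ⟨φ p, IntermediateField.algebraMap_mem _ p, ?_⟩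
          rw [← map_pow, hp2]
          simp only [map_add, map_neg, map_mul, map_ofNat]
          rw [hδq]
        · -- δ = −φ q
          have hδq : φ q = -δ := by linear_combination h
          refine hC ⟨φ p, IntermediateField.algebraMap_mem _ p, ?_⟩
          rw [← map_pow, hp2]
          simp only [map_add, map_neg, map_mul, map_ofNat]
          rw [hδq]; ring
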